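/- (Single-crossing threshold for two-outcome CPT comparisons) Let x = (x_1, x_2) and y = (y_1, y_2) be outcome profiles with x_1 < y_1 and x_2 > y_2, and let r ∈ ℝ be a reference point. Then there exists a unique q ∈ (0,1) such that for every probability vector p = (p_1, 1−p_1) with p_1 ∈ [0,1]: V^r(p,x) ≥ V^r(p,y) if and only if p_1 ≤ q. Moreover V^r((0,1),x) − V^r((0,1),y) > 0 > V^r((1,0),x) − V^r((1,0),y), and the regret V^r(p,x) − V^r(p,y) is strictly decreasing as a function of p_1 on (0,1). -/

import Mathlib

/-- The decision-weight form of the CPT value of the prospect `(p, z)` with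
reference point `r`, value function `v`, probability weighting functions
`wp` (for gains) and `wm` (for losses), computed using a permutation `a`
of the indices ordering `z` decreasingly. -/
noncomputable def cptVal {t : ℕ} (wp wm v : ℝ → ℝ) (r : ℝ) (p z : Fin t → ℝ)
    (a : Equiv.Perm (Fin t)) : ℝ :=
  ∑ j : Fin t,
    (if r ≤ z (a j) then
        wp (∑ k ∈ Finset.Iic j, p (a k)) - wp (∑ k ∈ Finset.Iio j, p (a k))
      else
        wm (∑ k ∈ Finset.Ici j, p (a k)) - wm (∑ k ∈ Finset.Ioi j, p (a k)))
      * v (z (a j))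

/-- The CPT value `V^r(p,z)`, computed with a canonical permutation ordering `z`
decreasingly (the value is independent of the choice of such a permutation). -/
noncomputable def CPT {t : ℕ} (wp wm v : ℝ → ℝ) (r : ℝ) (p z : Fin t → ℝ) : ℝ :=
  cptVal wp wm v r p z (Tuple.sort (fun j => -z j))

namespace CPTSC

lemma sort_eq_one {z : Fin 2 → ℝ} (h : z 1 ≤ z 0) :
    Tuple.sort (fun j => -z j) = 1 := by
  symm
  rw [Tuple.eq_sort_iff]
  constructor
  · intro i j hij
    fin_cases i <;> fin_cases j <;> simp_all
  · intro i j hij _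
    simpa using hij

lemma sort_eq_swap {z : Fin 2 → ℝ} (h : z 0 < z 1) :
    Tuple.sort (fun j => -z j) = Equiv.swap 0 1 := by
  symm
  rw [Tuple.eq_sort_iff]
  constructor
  · intro i j hij
    fin_cases i <;> fin_cases j <;> simp_all <;> linarith
  · intro i j hij he
    fin_cases i <;> fin_cases j <;> simp_all <;> linarith

variable (wp wm v : ℝ → ℝ) (r : ℝ)

/-- Explicit two-outcome CPT value: `q` is the probability of the top outcome `hi`. -/
noncomputable def E (q hi lo : ℝ) : ℝ :=
  (if r ≤ hi then wp q else 1 - wm (1 - q)) * v hi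
    + (if r ≤ lo then 1 - wp q else wm (1 - q)) * v lo

/-- `Wfun z0 z1 q` : explicit CPT value of the prospect `((q,1-q),(z0,z1))`. -/
noncomputable def Wfun (z0 z1 q : ℝ) : ℝ :=
  if z1 ≤ z0 then E wp wm v r q z0 z1 else E wp wm v r (1 - q) z1 z0

variable {wp wm v r}

lemma cpt_eq (hwp0 : wp 0 = 0) (hwp1 : wp 1 = 1) (hwm0 : wm 0 = 0) (hwm1 : wm 1 = 1)
    (z : Fin 2 → ℝ) (p₁ : ℝ) :
    CPT wp wm v r ![p₁, 1 - p₁] z = Wfun wp wm v r (z 0) (z 1) p₁ := by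
  have hI0 : Finset.Iic (0 : Fin 2) = {0} := by decide
  have hJ0 : Finset.Iio (0 : Fin 2) = ∅ := by decide
  have hK0 : Finset.Ici (0 : Fin 2) = {0, 1} := by decide
  have hL0 : Finset.Ioi (0 : Fin 2) = {1} := by decide
  have hI1 : Finset.Iic (1 : Fin 2) = {0, 1} := by decide
  have hJ1 : Finset.Iio (1 : Fin 2) = {0} := by decide
  have hK1 : Finset.Ici (1 : Fin 2) = {1} := by decide
  have hL1 : Finset.Ioi (1 : Fin 2) = ∅ := by decide
  have e1 : p₁ + (1 - p₁) = 1 := by ring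
  by_cases h : z 1 ≤ z 0
  · rw [CPT, sort_eq_one h, Wfun, if_pos h]
    simp [cptVal, Fin.sum_univ_two, hI0, hJ0, hK0, hL0, hI1, hJ1, hK1, hL1,
      Finset.sum_insert, e1, hwp0, hwp1, hwm0, hwm1, E]
  · push_neg at h
    rw [CPT, sort_eq_swap h, Wfun, if_neg (not_le.mpr h)]
    simp [cptVal, Fin.sum_univ_two, hI0, hJ0, hK0, hL0, hI1, hJ1, hK1, hL1,
      Finset.sum_insert, e1, hwp0, hwp1, hwm0, hwm1, E, Equiv.swap_apply_left,
      Equiv.swap_apply_right]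

lemma key_mono (hv : StrictMono v) (hvr : v r = 0) {cp cm : ℝ} (hcp : 0 < cp)
    (hcm : 0 < cm) : StrictMono fun z => (if r ≤ z then cp else cm) * v z := by
  intro a b hab
  dsimp only
  by_cases ha : r ≤ a
  · rw [if_pos ha, if_pos (ha.trans hab.le)]
    exact mul_lt_mul_of_pos_left (hv hab) hcp
  · rw [if_neg ha]
    by_cases hb : r ≤ b
    · rw [if_pos hb]
      have h1 : v a < 0 := by rw [← hvr]; exact hv (lt_of_not_ge ha)
      have h2 : 0 ≤ v b := by rw [← hvr]; exact hv.le_iff_le.mpr hb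
      nlinarith
    · rw [if_neg hb]
      exact mul_lt_mul_of_pos_left (hv hab) hcm

lemma key_anti (hv : StrictMono v) (hvr : v r = 0) {cp cm : ℝ} (hcp : cp < 0)
    (hcm : cm < 0) : StrictAnti fun z => (if r ≤ z then cp else cm) * v z := by
  intro a b hab
  dsimp only
  by_cases ha : r ≤ a
  · rw [if_pos ha, if_pos (ha.trans hab.le)]
    exact mul_lt_mul_of_neg_left (hv hab) hcp
  · rw [if_neg ha]
    by_cases hb : r ≤ b
    · rw [if_pos hb]
      have h1 : v a < 0 := by rw [← hvr]; exact hv (lt_of_not_ge ha)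
      have h2 : 0 ≤ v b := by rw [← hvr]; exact hv.le_iff_le.mpr hb
      nlinarith
    · rw [if_neg hb]
      exact mul_lt_mul_of_neg_left (hv hab) hcm

lemma glue_mono {c : ℝ} {g h : ℝ → ℝ} (hg : StrictMono g) (hh : StrictMono h)
    (he : g c = h c) : StrictMono fun z => if c ≤ z then h z else g z := by
  intro a b hab
  dsimp only
  by_cases ha : c ≤ a
  · rw [if_pos ha, if_pos (ha.trans hab.le)]; exact hh hab
  · rw [if_neg ha]
    by_cases hb : c ≤ b
    · rw [if_pos hb]
      calc g a < g c := hg (lt_of_not_ge ha)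
        _ = h c := he
        _ ≤ h b := hh.monotone hb
    · rw [if_neg hb]; exact hg hab

lemma glue_anti {c : ℝ} {g h : ℝ → ℝ} (hg : StrictAnti g) (hh : StrictAnti h)
    (he : g c = h c) : StrictAnti fun z => if z ≤ c then g z else h z := by
  intro a b hab
  dsimp only
  by_cases hb : b ≤ c
  · rw [if_pos hb, if_pos (hab.le.trans hb)]; exact hg hab
  · rw [if_neg hb]
    by_cases ha : a ≤ c
    · rw [if_pos ha]
      calc h b < h c := hh (lt_of_not_ge hb)
        _ = g c := he.symm
        _ ≤ g a := hg.antitone ha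
    · rw [if_neg ha]; exact hh hab

lemma W_inc_left (hwpm : StrictMonoOn wp (Set.Icc 0 1)) (hwmm : StrictMonoOn wm (Set.Icc 0 1))
    (hv : StrictMono v) (hvr : v r = 0) {s t : ℝ} (hs : 0 ≤ s) (hst : s < t) (ht : t ≤ 1)
    (z1 : ℝ) :
    StrictMono fun z0 => Wfun wp wm v r z0 z1 t - Wfun wp wm v r z0 z1 s := by
  have hsI : s ∈ Set.Icc (0:ℝ) 1 := ⟨hs, hst.le.trans ht⟩
  have htI : t ∈ Set.Icc (0:ℝ) 1 := ⟨hs.trans hst.le, ht⟩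
  have hsI' : 1 - s ∈ Set.Icc (0:ℝ) 1 := ⟨by linarith [hsI.2], by linarith⟩
  have htI' : 1 - t ∈ Set.Icc (0:ℝ) 1 := ⟨by linarith, by linarith [htI.1]⟩
  have ha : 0 < wp t - wp s := sub_pos.mpr (hwpm hsI htI hst)
  have hb : 0 < wm (1-s) - wm (1-t) := sub_pos.mpr (hwmm htI' hsI' (by linarith))
  have hc : 0 < wp (1-s) - wp (1-t) := sub_pos.mpr (hwpm htI' hsI' (by linarith))
  have hd : 0 < wm t - wm s := sub_pos.mpr (hwmm hsI htI hst)
  have heq : (fun z0 => Wfun wp wm v r z0 z1 t - Wfun wp wm v r z0 z1 s)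
      = fun z0 => if z1 ≤ z0 then
          (if r ≤ z0 then wp t - wp s else wm (1-s) - wm (1-t)) * v z0
            + (if r ≤ z1 then wp s - wp t else wm (1-t) - wm (1-s)) * v z1
        else
          (if r ≤ z0 then wp (1-s) - wp (1-t) else wm t - wm s) * v z0
            + (if r ≤ z1 then wp (1-t) - wp (1-s) else wm s - wm t) * v z1 := by
    funext z0
    by_cases h01 : z1 ≤ z0 <;> by_cases hr0 : r ≤ z0 <;> by_cases hr1 : r ≤ z1 <;>
      simp only [Wfun, E, h01, hr0, hr1, if_true, if_false, ite_true, ite_false] <;>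
      ring
  rw [heq]
  exact glue_mono ((key_mono hv hvr hc hd).add_const _)
    ((key_mono hv hvr ha hb).add_const _)
    (by by_cases hr : r ≤ z1 <;> simp only [hr, if_true, if_false, ite_true, ite_false] <;> ring)

lemma W_dec_right (hwpm : StrictMonoOn wp (Set.Icc 0 1)) (hwmm : StrictMonoOn wm (Set.Icc 0 1))
    (hv : StrictMono v) (hvr : v r = 0) {s t : ℝ} (hs : 0 ≤ s) (hst : s < t) (ht : t ≤ 1)
    (z0 : ℝ) :
    StrictAnti fun z1 => Wfun wp wm v r z0 z1 t - Wfun wp wm v r z0 z1 s := by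
  have hsI : s ∈ Set.Icc (0:ℝ) 1 := ⟨hs, hst.le.trans ht⟩
  have htI : t ∈ Set.Icc (0:ℝ) 1 := ⟨hs.trans hst.le, ht⟩
  have hsI' : 1 - s ∈ Set.Icc (0:ℝ) 1 := ⟨by linarith [hsI.2], by linarith⟩
  have htI' : 1 - t ∈ Set.Icc (0:ℝ) 1 := ⟨by linarith, by linarith [htI.1]⟩
  have ha : 0 < wp t - wp s := sub_pos.mpr (hwpm hsI htI hst)
  have hb : 0 < wm (1-s) - wm (1-t) := sub_pos.mpr (hwmm htI' hsI' (by linarith))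
  have hc : 0 < wp (1-s) - wp (1-t) := sub_pos.mpr (hwpm htI' hsI' (by linarith))
  have hd : 0 < wm t - wm s := sub_pos.mpr (hwmm hsI htI hst)
  have heq : (fun z1 => Wfun wp wm v r z0 z1 t - Wfun wp wm v r z0 z1 s)
      = fun z1 => if z1 ≤ z0 then
          (if r ≤ z1 then wp s - wp t else wm (1-t) - wm (1-s)) * v z1
            + (if r ≤ z0 then wp t - wp s else wm (1-s) - wm (1-t)) * v z0
        else
          (if r ≤ z1 then wp (1-t) - wp (1-s) else wm s - wm t) * v z1
            + (if r ≤ z0 then wp (1-s) - wp (1-t) else wm t - wm s) * v z0 := by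
    funext z1
    by_cases h01 : z1 ≤ z0 <;> by_cases hr0 : r ≤ z0 <;> by_cases hr1 : r ≤ z1 <;>
      simp only [Wfun, E, h01, hr0, hr1, if_true, if_false, ite_true, ite_false] <;>
      ring
  rw [heq]
  exact glue_anti
    ((key_anti hv hvr (by linarith) (by linarith)).add_const _)
    ((key_anti hv hvr (by linarith) (by linarith)).add_const _)
    (by by_cases hr : r ≤ z0 <;> simp only [hr, if_true, if_false, ite_true, ite_false] <;> ring)

/-- Endpoint: with probability `0` on the top slot the value is `v lo` side. -/
lemma W_at_zero (hwp0 : wp 0 = 0) (hwp1 : wp 1 = 1) (hwm0 : wm 0 = 0) (hwm1 : wm 1 = 1)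
    (z0 z1 : ℝ) : Wfun wp wm v r z0 z1 0 = v z1 := by
  unfold Wfun E
  norm_num
  split_ifs <;> simp [hwp0, hwp1, hwm0, hwm1] <;> ring

lemma W_at_one (hwp0 : wp 0 = 0) (hwp1 : wp 1 = 1) (hwm0 : wm 0 = 0) (hwm1 : wm 1 = 1)
    (z0 z1 : ℝ) : Wfun wp wm v r z0 z1 1 = v z0 := by
  unfold Wfun E
  norm_num
  split_ifs <;> simp [hwp0, hwp1, hwm0, hwm1] <;> ring

lemma W_cont (hwpc : ContinuousOn wp (Set.Icc 0 1)) (hwmc : ContinuousOn wm (Set.Icc 0 1))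
    (z0 z1 : ℝ) : ContinuousOn (fun q => Wfun wp wm v r z0 z1 q) (Set.Icc 0 1) := by
  have hmap : Set.MapsTo (fun q : ℝ => 1 - q) (Set.Icc 0 1) (Set.Icc 0 1) := by
    intro q hq
    simp only [Set.mem_Icc] at hq ⊢
    constructor <;> [skip; skip] <;> [linarith [hq.2]; linarith [hq.1]]
  have hwpc' : ContinuousOn (fun q : ℝ => wp (1 - q)) (Set.Icc 0 1) :=
    hwpc.comp ((continuous_const.sub continuous_id).continuousOn) hmap
  have hwmc' : ContinuousOn (fun q : ℝ => wm (1 - q)) (Set.Icc 0 1) :=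
    hwmc.comp ((continuous_const.sub continuous_id).continuousOn) hmap
  have hE : ∀ hi lo : ℝ, ContinuousOn (fun q => E wp wm v r q hi lo) (Set.Icc 0 1) := by
    intro hi lo
    unfold E
    apply ContinuousOn.add
    · apply ContinuousOn.mul _ continuousOn_const
      split_ifs
      · exact hwpc
      · exact continuousOn_const.sub hwmc'
    · apply ContinuousOn.mul _ continuousOn_const
      split_ifs
      · exact continuousOn_const.sub hwpc
      · exact hwmc'
  unfold Wfun
  split_ifs
  · exact hE z0 z1
  · exact (hE z1 z0).comp ((continuous_const.sub continuous_id).continuousOn) hmap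

end CPTSC

open CPTSC in
/-- single-crossing threshold for two-outcome CPT comparisons:
if `x₁ < y₁` and `x₂ > y₂`, then there is a unique `q ∈ (0,1)` such that for every
probability vector `(p₁, 1 − p₁)`, `V^r(p,x) ≥ V^r(p,y)` iff `p₁ ≤ q`; moreover the
regret is positive at `p₁ = 0`, negative at `p₁ = 1`, and strictly decreasing in
`p₁` on `(0,1)`. -/
theorem cpt_two_outcome_single_crossing (wp wm v : ℝ → ℝ) (r : ℝ)
    (hwpc : ContinuousOn wp (Set.Icc 0 1)) (hwmc : ContinuousOn wm (Set.Icc 0 1))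
    (hwpm : StrictMonoOn wp (Set.Icc 0 1)) (hwmm : StrictMonoOn wm (Set.Icc 0 1))
    (hwp0 : wp 0 = 0) (hwp1 : wp 1 = 1) (hwm0 : wm 0 = 0) (hwm1 : wm 1 = 1)
    (hv : StrictMono v) (hvc : Continuous v) (hvr : v r = 0)
    (x y : Fin 2 → ℝ) (h1 : x 0 < y 0) (h2 : y 1 < x 1) :
    (∃! q : ℝ, q ∈ Set.Ioo (0 : ℝ) 1 ∧
      ∀ p₁ ∈ Set.Icc (0 : ℝ) 1,
        (CPT wp wm v r ![p₁, 1 - p₁] y ≤ CPT wp wm v r ![p₁, 1 - p₁] x ↔ p₁ ≤ q)) ∧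
    CPT wp wm v r ![(0 : ℝ), 1] y < CPT wp wm v r ![(0 : ℝ), 1] x ∧
    CPT wp wm v r ![(1 : ℝ), 0] x < CPT wp wm v r ![(1 : ℝ), 0] y ∧
    StrictAntiOn
      (fun p₁ => CPT wp wm v r ![p₁, 1 - p₁] x - CPT wp wm v r ![p₁, 1 - p₁] y)
      (Set.Ioo (0 : ℝ) 1) := by
  set D : ℝ → ℝ := fun p₁ =>
    Wfun wp wm v r (x 0) (x 1) p₁ - Wfun wp wm v r (y 0) (y 1) p₁ with hDdef
  have hCx : ∀ p₁ : ℝ, CPT wp wm v r ![p₁, 1 - p₁] x = Wfun wp wm v r (x 0) (x 1) p₁ :=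
    fun p₁ => cpt_eq hwp0 hwp1 hwm0 hwm1 x p₁
  have hCy : ∀ p₁ : ℝ, CPT wp wm v r ![p₁, 1 - p₁] y = Wfun wp wm v r (y 0) (y 1) p₁ :=
    fun p₁ => cpt_eq hwp0 hwp1 hwm0 hwm1 y p₁
  have hfun : (fun p₁ => CPT wp wm v r ![p₁, 1 - p₁] x - CPT wp wm v r ![p₁, 1 - p₁] y) = D := by
    funext p₁; rw [hCx, hCy]
  -- strict antitonicity of D on [0,1]
  have hanti : StrictAntiOn D (Set.Icc 0 1) := by
    intro s hs t ht hst
    have h1' := (W_inc_left hwpm hwmm hv hvr hs.1 hst ht.2 (x 1)) h1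
    have h2' := (W_dec_right hwpm hwmm hv hvr hs.1 hst ht.2 (y 0)) h2
    simp only [hDdef]
    dsimp only at h1' h2' ⊢
    linarith
  -- continuity of D on [0,1]
  have hcont : ContinuousOn D (Set.Icc 0 1) :=
    (W_cont hwpc hwmc (x 0) (x 1)).sub (W_cont hwpc hwmc (y 0) (y 1))
  -- endpoints
  have hD0 : D 0 = v (x 1) - v (y 1) := by
    simp only [hDdef, W_at_zero hwp0 hwp1 hwm0 hwm1]
  have hD1 : D 1 = v (x 0) - v (y 0) := by
    simp only [hDdef, W_at_one hwp0 hwp1 hwm0 hwm1]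
  have hD0pos : 0 < D 0 := by rw [hD0]; have := hv h2; linarith
  have hD1neg : D 1 < 0 := by rw [hD1]; have := hv h1; linarith
  -- IVT
  obtain ⟨q, hqI, hq0⟩ : ∃ q ∈ Set.Icc (0:ℝ) 1, D q = 0 := by
    have h := intermediate_value_Icc' (by norm_num : (0:ℝ) ≤ 1) hcont
    have : (0:ℝ) ∈ Set.Icc (D 1) (D 0) := ⟨hD1neg.le, hD0pos.le⟩
    obtain ⟨q, hq, hq'⟩ := h this
    exact ⟨q, hq, hq'⟩
  have hq0' : q ≠ 0 := by rintro rfl; rw [hq0] at hD0pos; exact lt_irrefl 0 hD0pos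
  have hq1' : q ≠ 1 := by rintro rfl; rw [hq0] at hD1neg; exact lt_irrefl 0 hD1neg
  have hqIoo : q ∈ Set.Ioo (0:ℝ) 1 := ⟨hqI.1.lt_of_ne (Ne.symm hq0'), hqI.2.lt_of_ne hq1'⟩
  refine ⟨⟨q, ⟨hqIoo, ?_⟩, ?_⟩, ?_, ?_, ?_⟩
  · -- characterization
    intro p₁ hp₁
    rw [hCx, hCy]
    constructor
    · intro hle
      by_contra hgt
      push_neg at hgt
      have := hanti hqI hp₁ hgt
      rw [hq0] at this
      simp only [hDdef] at this
      linarith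
    · intro hle
      rcases hle.lt_or_eq with hlt | rfl
      · have := hanti hp₁ hqI hlt
        rw [hq0] at this
        simp only [hDdef] at this
        linarith
      · simp only [hDdef] at hq0
        linarith
  · -- uniqueness
    rintro q' ⟨hq'I, hq'char⟩
    have hqmem : q ∈ Set.Icc (0:ℝ) 1 := hqI
    have hq'mem : q' ∈ Set.Icc (0:ℝ) 1 := ⟨hq'I.1.le, hq'I.2.le⟩
    have hA : q ≤ q' := by
      have := (hq'char q hqmem).mp
      apply this
      rw [hCx, hCy]
      simp only [hDdef] at hq0
      linarith
    have hB : q' ≤ q := by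
      have hDq' : 0 ≤ D q' := by
        have := (hq'char q' hq'mem).mpr le_rfl
        rw [hCx, hCy] at this
        simp only [hDdef]
        linarith
      by_contra hgt
      push_neg at hgt
      have := hanti hqI hq'mem hgt
      rw [hq0] at this
      linarith
    exact le_antisymm hB hA
  · -- value at p₁ = 0
    have e : (![(0:ℝ), 1] : Fin 2 → ℝ) = ![(0:ℝ), 1 - 0] := by
      funext i; fin_cases i <;> norm_num
    rw [e, hCx, hCy, W_at_zero hwp0 hwp1 hwm0 hwm1, W_at_zero hwp0 hwp1 hwm0 hwm1]
    exact hv h2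
  · -- value at p₁ = 1
    have e : (![(1:ℝ), 0] : Fin 2 → ℝ) = ![(1:ℝ), 1 - 1] := by
      funext i; fin_cases i <;> norm_num
    rw [e, hCx, hCy, W_at_one hwp0 hwp1 hwm0 hwm1, W_at_one hwp0 hwp1 hwm0 hwm1]
    exact hv h1
  · -- strict antitonicity on (0,1)
    rw [hfun]
    exact hanti.mono Set.Ioo_subset_Icc_self
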